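/- arXiv:1503.03162 — 3 statements merged into one kernel-verified Lean document; each statement's English description precedes it below -/
import Mathlib

section
/- Let q = 4 and n = 1 + 2q + q³ + q^e + 2q^{e+1} with e a positive integer. Then g_{n,q} ≡ X^{q²} + S_e + X²S_e² + S_3S_e³ (mod X^{q^e} − X). If 2 | e but 3 ∤ e, then g_{n,q} is a permutation polynomial of F_{q^e}. -/
open Polynomial Finset

private lemma charP_two_of_card {K : Type*} [Field K] [Fintype K] {m : ℕ} (hm : 0 < m)
    (h : Fintype.card K = 2 ^ m) : CharP K 2 := by
  haveI := ringChar.charP K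
  obtain ⟨n, hp, hc⟩ := FiniteField.card K (ringChar K)
  have hdvd : ringChar K ∣ 2 ^ m := by
    rw [← h, hc]
    exact dvd_pow_self _ (by exact_mod_cast n.ne_zero)
  have h2 : ringChar K ∣ 2 := hp.dvd_of_dvd_pow hdvd
  have : ringChar K = 2 := (Nat.prime_dvd_prime_iff_eq hp Nat.prime_two).mp h2
  exact this ▸ ringChar.charP K

/-- divisibility reflects along composition with a nonconstant polynomial. -/
private lemma dvd_of_comp_dvd {F : Type*} [Field F] {A B p : F[X]} (hA : A.Monic)
    (hp : 0 < p.natDegree) (h : A.comp p ∣ B.comp p) : A ∣ B := by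
  by_cases hR : B %ₘ A = 0
  · exact (modByMonic_eq_zero_iff_dvd hA).mp hR
  · exfalso
    have hBR := modByMonic_add_div B A
    have hdvdR : A.comp p ∣ (B %ₘ A).comp p := by
      have h2 : B.comp p = (B %ₘ A).comp p + (A.comp p) * ((B /ₘ A).comp p) := by
        conv_lhs => rw [← hBR]
        simp [add_comp, mul_comp]
      have hmc : (B %ₘ A).comp p = B.comp p - (A.comp p) * ((B /ₘ A).comp p) := by
        rw [h2]; ring
      rw [hmc]
      exact dvd_sub h (Dvd.intro _ rfl)
    have hRc : (B %ₘ A).comp p ≠ 0 := by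
      intro h0
      rcases comp_eq_zero_iff.mp h0 with h1 | ⟨_, h2⟩
      · exact hR h1
      · rw [h2, natDegree_C] at hp; exact lt_irrefl 0 hp
    have hle := natDegree_le_of_dvd hdvdR hRc
    rw [natDegree_comp, natDegree_comp] at hle
    have hlt : (B %ₘ A).natDegree < A.natDegree :=
      natDegree_lt_natDegree hR (degree_modByMonic_lt B hA)
    have := Nat.le_of_mul_le_mul_right hle hp
    omega

private lemma expand5 {R : Type*} [CommRing R] (x a u : R) :
    (x + u) * (x ^ 8 + u ^ 2) * (x ^ 64 + u) * (a + u) * (a ^ 8 + u ^ 2) =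
      (x ^ 73 * a ^ 9) * u ^ 0
      + (x ^ 9 * a ^ 9 + x ^ 72 * a ^ 9 + x ^ 73 * a ^ 8) * u ^ 1
      + (x ^ 8 * a ^ 9 + x ^ 9 * a ^ 8 + x ^ 65 * a ^ 9 + x ^ 72 * a ^ 8 + x ^ 73 * a) * u ^ 2
      + (x * a ^ 9 + x ^ 8 * a ^ 8 + x ^ 9 * a + x ^ 64 * a ^ 9 + x ^ 65 * a ^ 8 + x ^ 72 * a
          + x ^ 73) * u ^ 3
      + (a ^ 9 + x * a ^ 8 + x ^ 8 * a + x ^ 9 + x ^ 64 * a ^ 8 + x ^ 65 * a + x ^ 72) * u ^ 4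
      + (a ^ 8 + x * a + x ^ 8 + x ^ 64 * a + x ^ 65) * u ^ 5
      + (a + x + x ^ 64) * u ^ 6
      + 1 * u ^ 7 := by
  ring

set_option maxHeartbeats 2000000 in
private lemma bigid {R : Type*} [CommRing R] (h2 : (2 : R) = 0) (x a : R) :
    (x * a ^ 9 + x ^ 8 * a ^ 8 + x ^ 9 * a + x ^ 64 * a ^ 9 + x ^ 65 * a ^ 8 + x ^ 72 * a
        + x ^ 73)
      + (a + x + x ^ 64)
    = ((x ^ 4 - x) ^ 16 + (a - x) + (x ^ 4 - x) ^ 2 * (a - x) ^ 2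
        + (x ^ 64 - x) * (a - x) ^ 3)
      + ((a ^ 4 - a) - (x ^ 4 - x)) *
        (x * a ^ 2 + x * a ^ 5 + x ^ 2 * a + x ^ 5 * a + x ^ 8 * a + x ^ 8 * a ^ 4 + x ^ 9
          + x ^ 12 + x ^ 64 * a ^ 2 + x ^ 64 * a ^ 5 + x ^ 65 * a ^ 4 + x ^ 66 + x ^ 68 * a
          + x ^ 69) := by
  linear_combination (x + x*a ^ 3 + (-2)*(x ^ 2*a ^ 2) + -(x ^ 2*a ^ 5) + (2)*(x ^ 3*a) + -(x ^ 4) + (2)*(x ^ 5*a ^ 2) + (-2)*(x ^ 6*a) + x ^ 7 + (2)*(x ^ 9*a) + -(x ^ 9*a ^ 4) + -(x ^ 10) + x ^ 12*a + (8)*(x ^ 19) + (-60)*(x ^ 22) + (280)*(x ^ 25) + (-910)*(x ^ 28) + (2184)*(x ^ 31) + (-4004)*(x ^ 34) + (5720)*(x ^ 37) + (-6435)*(x ^ 40) + (5720)*(x ^ 43) + (-4004)*(x ^ 46) + (2184)*(x ^ 49) + (-910)*(x ^ 52) + (280)*(x ^ 55) + (-60)*(x ^ 58) + (8)*(x ^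 61) + x ^ 65*a ^ 2 + -(x ^ 66*a) + -(x ^ 66*a ^ 4) + x ^ 68*a ^ 2 + x ^ 72*a + x ^ 73) * h2

set_option maxHeartbeats 4000000 in
set_option synthInstance.maxHeartbeats 1000000 in
/-- Proposition 3.6: for `q = 4` and `n = 1 + 2q + q³ + q^e + 2q^{e+1}` (with `e` positive),
`g_{n,q} ≡ X^{q²} + S_e + X²S_e² + S_3S_e³ (mod X^{q^e} − X)`; moreover if `2 ∣ e` but
`3 ∤ e`, then `g_{n,q}` permutes `F_{q^e}`. -/
theorem stmt16 (e : ℕ) (he : 0 < e)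
    (E : Type*) [Field E] [Fintype E] (hE : Fintype.card E = 4 ^ e)
    (F4 : Subfield E) [Fintype F4] (hF4 : Fintype.card F4 = 4)
    (n : ℕ) (hn : n = 1 + 2 * 4 + 4 ^ 3 + 4 ^ e + 2 * 4 ^ (e + 1))
    (g : Polynomial E)
    (hg : ∑ c : F4, (X + C (c : E)) ^ n = g.comp (X ^ 4 - X))
    (S : ℕ → Polynomial E) (hS : ∀ d, S d = ∑ i ∈ Finset.range d, X ^ 4 ^ i) :
    (X ^ 4 ^ e - X) ∣ g - (X ^ 4 ^ 2 + S e + X ^ 2 * S e ^ 2 + S 3 * S e ^ 3) ∧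
    (2 ∣ e → ¬ 3 ∣ e → Function.Bijective fun x : E => g.eval x) := by
  classical
  haveI : Fact (Nat.Prime 2) := ⟨Nat.prime_two⟩
  have h4e2 : ∀ i : ℕ, (4 : ℕ) ^ i = 2 ^ (2 * i) := by
    intro i; rw [pow_mul]; norm_num
  haveI hchE : CharP E 2 := charP_two_of_card (m := 2 * e) (by omega) (by rw [hE, h4e2])
  haveI hchF4 : CharP F4 2 := charP_two_of_card (m := 2) (by omega) (by rw [hF4]; norm_num)
  haveI hchEX : CharP E[X] 2 := charP_of_injective_ringHom (C_injective (R := E)) 2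
  have h2E : (2 : E) = 0 := by exact_mod_cast CharP.cast_eq_zero E 2
  have h2EX : (2 : E[X]) = 0 := by exact_mod_cast CharP.cast_eq_zero E[X] 2
  have hxq : ∀ x : E, x ^ 4 ^ e = x := by
    intro x; rw [← hE]; exact FiniteField.pow_card x
  -- facts about constants from F4
  have hc4 : ∀ c : F4, (c : E) ^ 4 = (c : E) := by
    intro c
    have h1 : c ^ 4 = c := by
      have := FiniteField.pow_card c; rwa [hF4] at this
    calc ((c : E)) ^ 4 = ((c ^ 4 : F4) : E) := by push_cast; ring
      _ = (c : E) := by rw [h1]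
  have hc4p : ∀ (c : F4) (i : ℕ), (c : E) ^ 4 ^ i = (c : E) := by
    intro c i
    induction i with
    | zero => simp
    | succ i ih => rw [pow_succ, pow_mul, ih, hc4]
  -- Frobenius on E[X]
  have hfrobadd : ∀ (pp qq : E[X]) (m : ℕ), (pp + qq) ^ 4 ^ m = pp ^ 4 ^ m + qq ^ 4 ^ m := by
    intro pp qq m; rw [h4e2 m]; exact add_pow_char_pow pp qq 2 (2 * m)
  have hfrobsub : ∀ (pp qq : E[X]) (m : ℕ), (pp - qq) ^ 4 ^ m = pp ^ 4 ^ m - qq ^ 4 ^ m := by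
    intro pp qq m; rw [h4e2 m]; exact sub_pow_char_pow pp qq (2 * m)
  -- telescope
  have htel : ∀ m : ℕ, (∑ i ∈ range m, ((X : E[X]) ^ 4 - X) ^ 4 ^ i) = X ^ 4 ^ m - X := by
    intro m
    induction m with
    | zero => simp
    | succ m ih =>
        rw [Finset.sum_range_succ, ih, hfrobsub]
        have h1 : ((X : E[X]) ^ 4) ^ 4 ^ m = X ^ 4 ^ (m + 1) := by
          rw [← pow_mul]
          congr 1
          rw [pow_succ]
          ring
        rw [h1]
        ring
  have hScomp : ∀ d : ℕ, (S d).comp ((X : E[X]) ^ 4 - X) = X ^ 4 ^ d - X := by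
    intro d
    rw [hS, ← htel d]
    simp only [Polynomial.comp, Polynomial.eval₂_finset_sum, eval₂_X_pow]
  -- the product form of (X + C c)^n
  have hfX : ∀ (c : F4) (m : ℕ),
      ((X : E[X]) + C (c : E)) ^ 4 ^ m = X ^ 4 ^ m + C (c : E) := by
    intro c m
    rw [hfrobadd, ← map_pow, hc4p]
  have hprod : ∀ c : F4, ((X : E[X]) + C (c : E)) ^ n =
      ((X : E[X]) + C (c : E)) * (X ^ 8 + (C (c : E)) ^ 2) * (X ^ 64 + C (c : E)) *
        (X ^ 4 ^ e + C (c : E)) * ((X ^ 4 ^ e) ^ 8 + (C (c : E)) ^ 2) := by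
    intro c
    have hCp8 : (C (c : E) : E[X]) ^ 8 = (C (c : E)) ^ 2 := by
      rw [← map_pow, ← map_pow, show ((c : E)) ^ 8 = (((c : E)) ^ 4) ^ 2 by ring, hc4]
    have hf2 : ((X : E[X]) + C (c : E)) ^ (2 * 4) = X ^ 8 + (C (c : E)) ^ 2 := by
      have h := hfrobadd X (C (c : E)) (3 / 2)
      have h' : ((X : E[X]) + C (c : E)) ^ (2 * 4) = X ^ 8 + (C (c : E)) ^ 8 := by
        have := add_pow_char_pow (p := 2) (X : E[X]) (C (c : E)) 3
        norm_num at this ⊢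
        exact this
      rw [h', hCp8]
    have hf3 : ((X : E[X]) + C (c : E)) ^ (4 ^ 3) = X ^ 64 + C (c : E) := by
      have h := hfX c 3
      norm_num at h
      exact h
    have hf5 : ((X : E[X]) + C (c : E)) ^ (2 * 4 ^ (e + 1)) =
        (X ^ 4 ^ e) ^ 8 + (C (c : E)) ^ 2 := by
      rw [mul_comm 2 (4 ^ (e + 1)), pow_mul, hfX c (e + 1)]
      have hsq : ((X : E[X]) ^ 4 ^ (e + 1) + C (c : E)) ^ 2 =
          (X ^ 4 ^ (e + 1)) ^ 2 + (C (c : E)) ^ 2 := by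
        linear_combination ((X : E[X]) ^ 4 ^ (e + 1) * C (c : E)) * h2EX
      rw [hsq]
      refine congrArg (· + _) ?_
      rw [← pow_mul, ← pow_mul]
      congr 1
      rw [pow_succ]
      ring
    rw [hn, pow_add, pow_add, pow_add, pow_add, pow_one, hf2, hf3, hfX c e, hf5]
  -- sums of powers over F4
  have hsum_lt : ∀ i : ℕ, i < 3 → (∑ c : F4, c ^ i) = 0 := by
    intro i hi
    exact FiniteField.sum_pow_lt_card_sub_one (K := F4) i (by rw [hF4]; omega)
  have hF4c4 : ∀ c : F4, c ^ 4 = c := by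
    intro c; have := FiniteField.pow_card c; rwa [hF4] at this
  have hs3 : (∑ c : F4, c ^ 3) = 1 := by
    have h1 : (∑ c : F4, c ^ 3) = ∑ c ∈ univ.erase (0 : F4), c ^ 3 := by
      rw [← Finset.add_sum_erase _ _ (mem_univ (0 : F4))]
      norm_num
    have h2 : (∑ c ∈ univ.erase (0 : F4), c ^ 3) = ∑ _c ∈ univ.erase (0 : F4), (1 : F4) :=
      Finset.sum_congr rfl (fun c hc => by
        have hc0 : c ≠ 0 := Finset.ne_of_mem_erase hc
        have h3 := FiniteField.pow_card_sub_one_eq_one c hc0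
        rw [hF4] at h3
        exact h3)
    rw [h1, h2, Finset.sum_const, Finset.card_erase_of_mem (mem_univ _), card_univ, hF4]
    show (3 : ℕ) • (1 : F4) = 1
    rw [nsmul_eq_mul, mul_one]
    have h4 : ((3 : ℕ) : F4) = 2 + 1 := by norm_num
    have h5 : (2 : F4) = 0 := by exact_mod_cast CharP.cast_eq_zero F4 2
    rw [h4, h5, zero_add]
  have hs0 : (∑ c : F4, c ^ 0) = 0 := hsum_lt 0 (by norm_num)
  have hs1 : (∑ c : F4, c ^ 1) = 0 := hsum_lt 1 (by norm_num)
  have hs2 : (∑ c : F4, c ^ 2) = 0 := hsum_lt 2 (by norm_num)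
  have hpow_red : ∀ (w v : ℕ), (∀ c : F4, c ^ w = c ^ v) →
      (∑ c : F4, c ^ w) = ∑ c : F4, c ^ v := by
    intro w v hwv
    exact Finset.sum_congr rfl (fun c _ => hwv c)
  have hs4 : (∑ c : F4, c ^ 4) = 0 := by
    rw [hpow_red 4 1 (fun c => by rw [hF4c4, pow_one])]
    exact hs1
  have hs5 : (∑ c : F4, c ^ 5) = 0 := by
    rw [hpow_red 5 2 (fun c => by
      rw [show 5 = 4 + 1 by norm_num, pow_add, hF4c4, pow_one, ← pow_two])]
    exact hs2
  have hs6 : (∑ c : F4, c ^ 6) = 1 := by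
    rw [hpow_red 6 3 (fun c => by
      rw [show 6 = 4 + 2 by norm_num, pow_add, hF4c4, show (3:ℕ) = 1 + 2 by norm_num, pow_add,
        pow_one])]
    exact hs3
  have hs7 : (∑ c : F4, c ^ 7) = 0 := by
    rw [hpow_red 7 1 (fun c => by
      rw [show 7 = 4 + 3 by norm_num, pow_add, hF4c4, show c * c ^ 3 = c ^ 4 by ring, hF4c4,
        pow_one])]
    exact hs1
  -- pushing F4 sums into E[X]
  have hCsum : ∀ w : ℕ, (∑ c : F4, (C (c : E)) ^ w) = C (((∑ c : F4, c ^ w : F4) : E)) := by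
    intro w
    have h1 : ((∑ c : F4, c ^ w : F4) : E) = ∑ c : F4, ((c : E)) ^ w := by
      have h2 := map_sum (F4.subtype) (fun c : F4 => c ^ w) univ
      simpa using h2
    have h3 := map_sum (C : E →+* E[X]) (fun c : F4 => ((c : E)) ^ w) univ
    rw [h1, h3]
    simp only [map_pow]
  -- the reduced sum
  have hsum : (∑ c : F4, ((X : E[X]) + C (c : E)) ^ n) =
      ((X : E[X]) * (X ^ 4 ^ e) ^ 9 + X ^ 8 * (X ^ 4 ^ e) ^ 8 + X ^ 9 * (X ^ 4 ^ e)
        + X ^ 64 * (X ^ 4 ^ e) ^ 9 + X ^ 65 * (X ^ 4 ^ e) ^ 8 + X ^ 72 * (X ^ 4 ^ e)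
        + X ^ 73)
      + ((X ^ 4 ^ e) + X + X ^ 64) := by
    have hexp : ∀ c : F4, ((X : E[X]) + C (c : E)) ^ n =
        ((X : E[X]) ^ 73 * (X ^ 4 ^ e) ^ 9) * (C (c : E)) ^ 0
        + (X ^ 9 * (X ^ 4 ^ e) ^ 9 + X ^ 72 * (X ^ 4 ^ e) ^ 9 + X ^ 73 * (X ^ 4 ^ e) ^ 8)
            * (C (c : E)) ^ 1
        + (X ^ 8 * (X ^ 4 ^ e) ^ 9 + X ^ 9 * (X ^ 4 ^ e) ^ 8 + X ^ 65 * (X ^ 4 ^ e) ^ 9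
            + X ^ 72 * (X ^ 4 ^ e) ^ 8 + X ^ 73 * (X ^ 4 ^ e)) * (C (c : E)) ^ 2
        + (X * (X ^ 4 ^ e) ^ 9 + X ^ 8 * (X ^ 4 ^ e) ^ 8 + X ^ 9 * (X ^ 4 ^ e)
            + X ^ 64 * (X ^ 4 ^ e) ^ 9 + X ^ 65 * (X ^ 4 ^ e) ^ 8 + X ^ 72 * (X ^ 4 ^ e)
            + X ^ 73) * (C (c : E)) ^ 3
        + ((X ^ 4 ^ e) ^ 9 + X * (X ^ 4 ^ e) ^ 8 + X ^ 8 * (X ^ 4 ^ e) + X ^ 9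
            + X ^ 64 * (X ^ 4 ^ e) ^ 8 + X ^ 65 * (X ^ 4 ^ e) + X ^ 72) * (C (c : E)) ^ 4
        + ((X ^ 4 ^ e) ^ 8 + X * (X ^ 4 ^ e) + X ^ 8 + X ^ 64 * (X ^ 4 ^ e) + X ^ 65)
            * (C (c : E)) ^ 5
        + ((X ^ 4 ^ e) + X + X ^ 64) * (C (c : E)) ^ 6
        + 1 * (C (c : E)) ^ 7 := fun c => by
      rw [hprod c]
      exact expand5 (X : E[X]) (X ^ 4 ^ e) (C (c : E))
    simp only [hexp]
    simp only [Finset.sum_add_distrib, ← Finset.mul_sum]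
    rw [hCsum 0, hCsum 1, hCsum 2, hCsum 3, hCsum 4, hCsum 5, hCsum 6, hCsum 7,
      hs0, hs1, hs2, hs3, hs4, hs5, hs6, hs7]
    push_cast
    simp only [map_zero, map_one, mul_zero, mul_one, add_zero, zero_add]
  -- the key congruence, composed with X^4 - X
  set h0 : E[X] := X ^ 4 ^ 2 + S e + X ^ 2 * S e ^ 2 + S 3 * S e ^ 3 with hh0
  have hh0comp : h0.comp ((X : E[X]) ^ 4 - X) =
      (((X : E[X]) ^ 4 - X) ^ 16 + (X ^ 4 ^ e - X)
        + ((X : E[X]) ^ 4 - X) ^ 2 * (X ^ 4 ^ e - X) ^ 2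
        + ((X : E[X]) ^ 64 - X) * (X ^ 4 ^ e - X) ^ 3) := by
    rw [hh0]
    simp only [add_comp, mul_comp, pow_comp, X_comp, hScomp]
    norm_num
  have hMcomp : ((X : E[X]) ^ 4 ^ e - X).comp ((X : E[X]) ^ 4 - X) =
      ((X ^ 4 ^ e) ^ 4 - X ^ 4 ^ e) - ((X : E[X]) ^ 4 - X) := by
    simp only [sub_comp, pow_comp, X_comp]
    rw [hfrobsub]
    congr 2
    rw [← pow_mul, ← pow_mul, mul_comm]
  set KX : E[X] := X * (X ^ 4 ^ e) ^ 2 + X * (X ^ 4 ^ e) ^ 5 + X ^ 2 * (X ^ 4 ^ e)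
      + X ^ 5 * (X ^ 4 ^ e) + X ^ 8 * (X ^ 4 ^ e) + X ^ 8 * (X ^ 4 ^ e) ^ 4 + X ^ 9
      + X ^ 12 + X ^ 64 * (X ^ 4 ^ e) ^ 2 + X ^ 64 * (X ^ 4 ^ e) ^ 5
      + X ^ 65 * (X ^ 4 ^ e) ^ 4 + X ^ 66 + X ^ 68 * (X ^ 4 ^ e) + X ^ 69 with hKX
  have hgh0 : (g - h0).comp ((X : E[X]) ^ 4 - X) =
      (((X : E[X]) ^ 4 ^ e - X).comp ((X : E[X]) ^ 4 - X)) * KX := by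
    rw [sub_comp, ← hg, hsum, hMcomp, hh0comp, hKX]
    have hb := bigid h2EX (X : E[X]) (X ^ 4 ^ e)
    linear_combination hb
  have hMmonic : ((X : E[X]) ^ 4 ^ e - X).Monic := by
    apply monic_X_pow_sub
    rw [degree_X]
    exact_mod_cast Nat.one_lt_pow (by omega) (by norm_num)
  have hWdeg : 0 < ((X : E[X]) ^ 4 - X).natDegree := by
    have : ((X : E[X]) ^ 4 - X).natDegree = 4 := by
      rw [natDegree_sub_eq_left_of_natDegree_lt (by simp [natDegree_X_pow, natDegree_X])]
      simp
    omega
  have hdvd : ((X : E[X]) ^ 4 ^ e - X) ∣ (g - h0) :=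
    dvd_of_comp_dvd hMmonic hWdeg ⟨KX, hgh0⟩
  refine ⟨hdvd, ?_⟩
  intro he2 he3
  -- evaluation of g on E
  obtain ⟨k, hk⟩ := hdvd
  have heval : ∀ x : E, g.eval x = h0.eval x := by
    intro x
    have h1 : g.eval x - h0.eval x = (x ^ 4 ^ e - x) * k.eval x := by
      rw [← eval_sub, hk]
      simp [eval_mul, eval_sub, eval_pow]
    rw [hxq x, sub_self, zero_mul] at h1
    exact sub_eq_zero.mp h1
  have h0eval : ∀ x : E, h0.eval x =
      x ^ 16 + (∑ i ∈ range e, x ^ 4 ^ i) + x ^ 2 * (∑ i ∈ range e, x ^ 4 ^ i) ^ 2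
        + (x + x ^ 4 + x ^ 16) * (∑ i ∈ range e, x ^ 4 ^ i) ^ 3 := by
    intro x
    rw [hh0, hS e, hS 3]
    simp only [eval_add, eval_mul, eval_pow, eval_X, eval_finset_sum]
    rw [Finset.sum_range_succ, Finset.sum_range_succ, Finset.sum_range_one]
    norm_num
  have hfun : (fun x : E => g.eval x) = fun x : E =>
      x ^ 16 + (∑ i ∈ range e, x ^ 4 ^ i) + x ^ 2 * (∑ i ∈ range e, x ^ 4 ^ i) ^ 2
        + (x + x ^ 4 + x ^ 16) * (∑ i ∈ range e, x ^ 4 ^ i) ^ 3 :=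
    funext fun x => (heval x).trans (h0eval x)
  rw [hfun]
  apply Finite.injective_iff_bijective.mp
  -- additive / multiplicative facts about the trace-like sum
  have frobE : ∀ (x y : E) (m : ℕ), (x + y) ^ 4 ^ m = x ^ 4 ^ m + y ^ 4 ^ m := by
    intro x y m; rw [h4e2 m]; exact add_pow_char_pow x y 2 (2 * m)
  have hTadd : ∀ x y : E, (∑ i ∈ range e, (x + y) ^ 4 ^ i)
      = (∑ i ∈ range e, x ^ 4 ^ i) + ∑ i ∈ range e, y ^ 4 ^ i := by
    intro x y
    rw [← Finset.sum_add_distrib]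
    exact Finset.sum_congr rfl fun i _ => frobE x y i
  have hTsq : ∀ x : E, (∑ i ∈ range e, x ^ 4 ^ i) ^ 2 = ∑ i ∈ range e, (x ^ 2) ^ 4 ^ i := by
    intro x
    rw [sum_pow_char]
    exact Finset.sum_congr rfl fun i _ => by rw [← pow_mul, ← pow_mul, mul_comm]
  have hT4 : ∀ x : E, (∑ i ∈ range e, (x ^ 4) ^ 4 ^ i) = ∑ i ∈ range e, x ^ 4 ^ i := by
    intro x
    have h3 : ∀ i : ℕ, (x ^ 4) ^ 4 ^ i = x ^ 4 ^ (i + 1) := fun i => by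
      rw [← pow_mul]; congr 1; rw [pow_succ]; ring
    calc (∑ i ∈ range e, (x ^ 4) ^ 4 ^ i) = ∑ i ∈ range e, x ^ 4 ^ (i + 1) :=
          Finset.sum_congr rfl fun i _ => h3 i
      _ = ∑ i ∈ range e, x ^ 4 ^ i := by
          have h1 := Finset.sum_range_succ' (fun i => x ^ 4 ^ i) e
          have h2 := Finset.sum_range_succ (fun i => x ^ 4 ^ i) e
          simp only [pow_zero, pow_one] at h1
          rw [hxq x] at h2
          linear_combination h2 - h1
  have hT4pow : ∀ x : E, (∑ i ∈ range e, x ^ 4 ^ i) ^ 4 = ∑ i ∈ range e, x ^ 4 ^ i := by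
    intro x
    have h1 : (∑ i ∈ range e, x ^ 4 ^ i) ^ 4 = ((∑ i ∈ range e, x ^ 4 ^ i) ^ 2) ^ 2 := by
      ring
    rw [h1, hTsq x, hTsq (x ^ 2)]
    rw [show ((x : E) ^ 2) ^ 2 = x ^ 4 by ring]
    exact hT4 x
  have hfix : ∀ α : E, α ^ 4 = α → ∀ i : ℕ, α ^ 4 ^ i = α := by
    intro α hα i
    induction i with
    | zero => simp
    | succ i ih => rw [pow_succ, pow_mul, ih, hα]
  have hTmul : ∀ α x : E, α ^ 4 = α →
      (∑ i ∈ range e, (α * x) ^ 4 ^ i) = α * ∑ i ∈ range e, x ^ 4 ^ i := by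
    intro α x hα
    rw [Finset.mul_sum]
    exact Finset.sum_congr rfl fun i _ => by rw [mul_pow, hfix α hα i]
  have hT1 : (∑ _i ∈ range e, (1 : E)) = 0 := by
    rw [Finset.sum_const, card_range, nsmul_eq_mul, mul_one]
    obtain ⟨m, hm⟩ := he2
    rw [hm]
    push_cast
    rw [h2E]
    ring
  have hTconst : ∀ α : E, α ^ 4 = α → (∑ i ∈ range e, α ^ 4 ^ i) = 0 := by
    intro α hα
    have h1 : (∑ i ∈ range e, α ^ 4 ^ i) = ∑ _i ∈ range e, α * 1 := by
      exact Finset.sum_congr rfl fun i _ => by rw [mul_one, hfix α hα i]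
    rw [h1, ← Finset.mul_sum, hT1, mul_zero]
  -- T is preserved by the map
  have hTf : ∀ x : E,
      (∑ i ∈ range e, (x ^ 16 + (∑ i ∈ range e, x ^ 4 ^ i)
        + x ^ 2 * (∑ i ∈ range e, x ^ 4 ^ i) ^ 2
        + (x + x ^ 4 + x ^ 16) * (∑ i ∈ range e, x ^ 4 ^ i) ^ 3) ^ 4 ^ i)
      = ∑ i ∈ range e, x ^ 4 ^ i := by
    intro x
    set t : E := ∑ i ∈ range e, x ^ 4 ^ i with ht
    have ht4 : t ^ 4 = t := by rw [ht]; exact hT4pow x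
    have p1 : (∑ i ∈ range e, (x ^ 16) ^ 4 ^ i) = t := by
      rw [show (x : E) ^ 16 = (x ^ 4) ^ 4 by ring, hT4 (x ^ 4), hT4 x]
    have p2 : (∑ i ∈ range e, t ^ 4 ^ i) = 0 := hTconst t ht4
    have p3 : (∑ i ∈ range e, (x ^ 2 * t ^ 2) ^ 4 ^ i) = t := by
      rw [show (x : E) ^ 2 * t ^ 2 = t ^ 2 * x ^ 2 by ring,
        hTmul (t ^ 2) (x ^ 2) (by rw [show (t ^ 2) ^ 4 = (t ^ 4) ^ 2 by ring, ht4]),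
        ← hTsq x, ← ht]
      rw [show t ^ 2 * t ^ 2 = (t ^ 2) ^ 2 by ring, show (t ^ 2) ^ 2 = t ^ 4 by ring, ht4]
    have p4 : (∑ i ∈ range e, ((x + x ^ 4 + x ^ 16) * t ^ 3) ^ 4 ^ i)
        = t ^ 3 * (t + t + t) := by
      rw [mul_comm, hTmul (t ^ 3) _ (by rw [show (t ^ 3) ^ 4 = (t ^ 4) ^ 3 by ring, ht4])]
      congr 1
      rw [hTadd, hTadd, hT4 x, p1, ← ht]
    rw [hTadd, hTadd, hTadd, p1, p2, p3, p4]
    linear_combination 3 * ht4 + 2 * t * h2E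
  -- injectivity
  intro x y hxy
  dsimp only at hxy
  have hτ : (∑ i ∈ range e, x ^ 4 ^ i) = ∑ i ∈ range e, y ^ 4 ^ i := by
    have h1 := hTf x
    have h2 := hTf y
    rw [← h1, ← h2, hxy]
  set τ : E := ∑ i ∈ range e, y ^ 4 ^ i with hτdef
  have hz16 : (x - y) ^ 16 + τ ^ 2 * (x - y) ^ 2
      + τ ^ 3 * ((x - y) + (x - y) ^ 4 + (x - y) ^ 16) = 0 := by
    linear_combination hxy + (1 + x*τ ^ 2 + x*(∑ i ∈ range e, x ^ 4 ^ i)*τ + x*(∑ i ∈ range e, x ^ 4 ^ i) ^ 2 + x ^ 2*τ + x ^ 2*(∑ i ∈ range e, x ^ 4 ^ i) + x ^ 4*τ ^ 2 + x ^ 4*(∑ i ∈ range e, x ^ 4 ^ i)*τ + x ^ 4*(∑ i ∈ range e, x ^ 4 ^ i) ^ 2 + x ^ 16*τ ^ 2 + x ^ 16*(∑ i ∈ range e, x ^ 4 ^ i)*τ + x ^ 16*(∑ i ∈ range e, x ^ 4 ^ i) ^ 2) * hτ + (τ + (-1)*(∑ i ∈ range e, x ^ 4 ^ i) + y ^ 2*τ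 ^ 2 + y ^ 4*τ ^ 3 + y ^ 16 + y ^ 16*τ ^ 3 + x*τ ^ 3 + (-1)*x*(∑ i ∈ range e, x ^ 4 ^ i) ^ 3 + (-1)*x*y*τ ^ 2 + (-2)*x*y ^ 3*τ ^ 3 + (-8)*x*y ^ 15 + (-8)*x*y ^ 15*τ ^ 3 + x ^ 2*τ ^ 2 + (-1)*x ^ 2*(∑ i ∈ range e, x ^ 4 ^ i) ^ 2 + (3)*x ^ 2*y ^ 2*τ ^ 3 + (60)*x ^ 2*y ^ 14 + (60)*x ^ 2*y ^ 14*τ ^ 3 + (-2)*x ^ 3*y*τ ^ 3 + (-280)*x ^ 3*y ^ 13 + (-280)*x ^ 3*y ^ 13*τ ^ 3 + x ^ 4*τ ^ 3 + (-1)*x ^ 4*(∑ i ∈ range e, x ^ 4 ^ i) ^ 3 + (910)*x ^ 4*y ^ 12 + (910)*x ^ 4*y ^ 12*τ ^ 3 + (-2184)*x ^ 5*y ^ 11 + (-2184)*x ^ 5*y ^ 11*τ ^ 3 + (4004)*x ^ 6*y ^ 10 + (4004)*x ^ 6*y ^ 10*τ ^ 3 + (-5720)*x ^ 7*y ^ 9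 + (-5720)*x ^ 7*y ^ 9*τ ^ 3 + (6435)*x ^ 8*y ^ 8 + (6435)*x ^ 8*y ^ 8*τ ^ 3 + (-5720)*x ^ 9*y ^ 7 + (-5720)*x ^ 9*y ^ 7*τ ^ 3 + (4004)*x ^ 10*y ^ 6 + (4004)*x ^ 10*y ^ 6*τ ^ 3 + (-2184)*x ^ 11*y ^ 5 + (-2184)*x ^ 11*y ^ 5*τ ^ 3 + (910)*x ^ 12*y ^ 4 + (910)*x ^ 12*y ^ 4*τ ^ 3 + (-280)*x ^ 13*y ^ 3 + (-280)*x ^ 13*y ^ 3*τ ^ 3 + (60)*x ^ 14*y ^ 2 + (60)*x ^ 14*y ^ 2*τ ^ 3 + (-8)*x ^ 15*y + (-8)*x ^ 15*y*τ ^ 3 + x ^ 16*τ ^ 3 + (-1)*x ^ 16*(∑ i ∈ range e, x ^ 4 ^ i) ^ 3) * h2E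
  by_cases hτ0 : τ = 0
  · have h16 : (x - y) ^ 16 = 0 := by
      rw [hτ0] at hz16
      linear_combination hz16
    have hzz : x - y = 0 := pow_eq_zero_iff (by norm_num) |>.mp h16
    exact sub_eq_zero.mp hzz
  · have ht4 : τ ^ 4 = τ := by rw [hτdef]; exact hT4pow y
    have hτ3 : τ ^ 3 = 1 := by
      have hcan : τ * τ ^ 3 = τ * 1 := by rw [mul_one]; linear_combination ht4
      exact mul_left_cancel₀ hτ0 hcan
    have hz4 : (x - y) ^ 4 + τ ^ 2 * (x - y) ^ 2 + (x - y) = 0 := by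
      linear_combination hz16 + (-(x - y) - (x - y) ^ 4 - (x - y) ^ 16) * hτ3
        + (-(x - y) ^ 16) * h2E
    by_cases hz0 : x - y = 0
    · exact sub_eq_zero.mp hz0
    · exfalso
      set w : E := τ ^ 2 * (x - y) with hwdef
      have hweq : w ^ 4 + w ^ 2 + w = 0 := by
        rw [hwdef]
        linear_combination τ ^ 2 * hz4 + ((x - y) ^ 4 * τ ^ 2 + (x - y) ^ 4 * τ ^ 5) * hτ3
      have hw0 : w ≠ 0 := by
        rw [hwdef]; exact mul_ne_zero (pow_ne_zero _ hτ0) hz0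
      have hw3 : w ^ 3 = w + 1 := by
        have hcan : w * w ^ 3 = w * (w + 1) := by
          linear_combination hweq - (w ^ 2 + w) * h2E
        exact mul_left_cancel₀ hw0 hcan
      have hw7 : w ^ 7 = 1 := by
        linear_combination (1 + w + w ^ 2 + w ^ 4) * hw3 + (w + w ^ 2) * h2E
      have hp4 : (1 : ℕ) ≤ 4 ^ e := Nat.one_le_pow e 4 (by norm_num)
      have hwE : w ^ (4 ^ e - 1) = 1 := by
        have h1 : w ^ 4 ^ e = w := hxq w
        have h2 : 4 ^ e - 1 + 1 = 4 ^ e := by omega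
        have h3 : w ^ (4 ^ e - 1) * w = 1 * w := by
          rw [← pow_succ, h2, h1, one_mul]
        exact mul_right_cancel₀ hw0 h3
      have hord7 : orderOf w ∣ 7 := orderOf_dvd_of_pow_eq_one hw7
      have hordE : orderOf w ∣ 4 ^ e - 1 := orderOf_dvd_of_pow_eq_one hwE
      have h7nd : ¬ (7 ∣ 4 ^ e - 1) := by
        intro hdvd
        have hz7 : ((4 ^ e - 1 : ℕ) : ZMod 7) = 0 :=
          (ZMod.natCast_eq_zero_iff _ _).mpr hdvd
        rw [Nat.cast_sub hp4] at hz7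
        push_cast at hz7
        have h41 : ((4 : ZMod 7)) ^ e = 1 := by linear_combination hz7
        have hmod : ((4 : ZMod 7)) ^ e = 4 ^ (e % 3) := by
          conv_lhs => rw [← Nat.div_add_mod e 3]
          rw [pow_add, pow_mul]
          rw [show ((4 : ZMod 7) ^ 3) = 1 by decide, one_pow, one_mul]
        rw [hmod] at h41
        have h3 : e % 3 = 1 ∨ e % 3 = 2 := by omega
        rcases h3 with h | h <;> rw [h] at h41 <;> revert h41 <;> decide
      have hcop : Nat.Coprime 7 (4 ^ e - 1) :=
        (Nat.Prime.coprime_iff_not_dvd (by norm_num)).mpr h7nd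
      have hd1 : orderOf w ∣ 1 := by
        have hgd := Nat.dvd_gcd hord7 hordE
        rwa [Nat.Coprime.gcd_eq_one hcop] at hgd
      have hw1 : w = 1 := orderOf_eq_one_iff.mp (Nat.dvd_one.mp hd1)
      rw [hw1] at hw3
      have hcontr : (1 : E) = 0 := by linear_combination -hw3
      exact one_ne_zero hcontr
end

section
/- Let q = 4 and f = S_a + X²S_e² + S_b²S_e² ∈ F_{q^e}[X], where a, b, e are positive integers. If 2 | (a+b), gcd(e, a) = 1, and gcd( (X^{2a}+1+X^{2b+1}+X³)/(X+1)², (X^e+1)/(X+1) ) = 1 in F_4[X], then f is a permutation polynomial of F_{4^e}. -/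
open Polynomial Finset

/-! ### Auxiliary machinery -/

/-- `auxT d x = ∑_{i<d} x^(4^i)`. -/
def auxT {R : Type*} [CommSemiring R] (d : ℕ) (x : R) : R :=
  ∑ i ∈ Finset.range d, x ^ 4 ^ i

lemma two_pow_two_mul (i : ℕ) : (2 : ℕ) ^ (2 * i) = 4 ^ i := by
  rw [pow_mul]; norm_num

section AuxT

variable {R : Type*} [CommRing R] [CharP R 2]

lemma pow4pow_add (x y : R) (k : ℕ) : (x + y) ^ 4 ^ k = x ^ 4 ^ k + y ^ 4 ^ k := by
  rw [← two_pow_two_mul]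
  exact add_pow_char_pow ..

lemma auxT_add (d : ℕ) (x y : R) : auxT d (x + y) = auxT d x + auxT d y := by
  unfold auxT
  rw [← Finset.sum_add_distrib]
  exact Finset.sum_congr rfl fun i _ => pow4pow_add x y i

lemma pow4_fix {c : R} (hc : c ^ 4 = c) : ∀ i, c ^ 4 ^ i = c
  | 0 => pow_one c
  | (i + 1) => by rw [pow_succ, pow_mul, pow4_fix hc i, hc]

lemma auxT_smul (d : ℕ) {c : R} (x : R) (hc : c ^ 4 = c) :
    auxT d (c * x) = c * auxT d x := by
  unfold auxT
  rw [Finset.mul_sum]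
  exact Finset.sum_congr rfl fun i _ => by rw [mul_pow, pow4_fix hc]

lemma auxT_sum (d : ℕ) {ι : Type*} (s : Finset ι) (g : ι → R) :
    auxT d (∑ j ∈ s, g j) = ∑ j ∈ s, auxT d (g j) := by
  unfold auxT
  have h : ∀ i : ℕ, (∑ j ∈ s, g j) ^ 4 ^ i = ∑ j ∈ s, g j ^ 4 ^ i := fun i => by
    rw [← two_pow_two_mul]
    exact sum_pow_char_pow 2 (2 * i) s g
  rw [Finset.sum_congr rfl fun i _ => h i, Finset.sum_comm]

lemma auxT_pow4 (d k : ℕ) (x : R) : auxT d (x ^ 4 ^ k) = (auxT d x) ^ 4 ^ k := by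
  unfold auxT
  rw [← two_pow_two_mul, sum_pow_char_pow]
  refine Finset.sum_congr rfl fun i _ => ?_
  rw [two_pow_two_mul, ← pow_mul, ← pow_mul, Nat.mul_comm]

lemma auxT_sq (d : ℕ) (x : R) : auxT d (x ^ 2) = (auxT d x) ^ 2 := by
  unfold auxT
  rw [sum_pow_char 2]
  refine Finset.sum_congr rfl fun i _ => ?_
  rw [← pow_mul, ← pow_mul, Nat.mul_comm]

lemma auxT_fixed (d : ℕ) {t : R} (ht : t ^ 4 = t) : auxT d t = (d : R) * t := by
  unfold auxT
  rw [Finset.sum_congr rfl fun i _ => pow4_fix ht i, Finset.sum_const,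
    Finset.card_range, nsmul_eq_mul]

lemma auxT_frob (d : ℕ) (x : R) (hx : x ^ 4 ^ d = x) : (auxT d x) ^ 4 = auxT d x := by
  have hstep : (auxT d x) ^ 4 = ∑ i ∈ Finset.range d, x ^ 4 ^ (i + 1) := by
    unfold auxT
    rw [show ((∑ i ∈ Finset.range d, x ^ 4 ^ i) ^ 4)
        = (∑ i ∈ Finset.range d, x ^ 4 ^ i) ^ 2 ^ 2 from rfl, sum_pow_char_pow]
    exact Finset.sum_congr rfl fun i _ => by
      rw [← pow_mul, show 4 ^ i * 2 ^ 2 = 4 ^ (i + 1) from by rw [pow_succ 4 i]; norm_num]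
  rw [hstep]
  unfold auxT
  have h1 := Finset.sum_range_succ' (fun i => x ^ 4 ^ i) d
  have h2 := Finset.sum_range_succ (fun i => x ^ 4 ^ i) d
  rw [h2, hx] at h1
  simp only [pow_zero, pow_one] at h1
  exact (add_right_cancel h1).symm

end AuxT

section Geom

lemma geom2 {R : Type*} [CommRing R] [CharP R 2] (x : R) (n : ℕ) :
    (∑ i ∈ Finset.range n, x ^ i) * (x + 1) = x ^ n + 1 := by
  have h := geom_sum_mul x n
  rwa [CharTwo.sub_eq_add, CharTwo.sub_eq_add] at h

/-- Key coprimality lemma: if `gcd e a = 1` then `∑_{i<a} X^i` and `∑_{i<e} X^i`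
are coprime in `(ZMod 2)[X]`. -/
lemma aux_coprime_geom (a e : ℕ) (ha : 0 < a) (hea : Nat.gcd e a = 1) :
    IsCoprime (∑ i ∈ Finset.range a, (X : Polynomial (ZMod 2)) ^ i)
      (∑ i ∈ Finset.range e, (X : Polynomial (ZMod 2)) ^ i) := by
  classical
  by_contra hcop
  set ga : Polynomial (ZMod 2) := ∑ i ∈ Finset.range a, (X : Polynomial (ZMod 2)) ^ i with hga
  set ge : Polynomial (ZMod 2) := ∑ i ∈ Finset.range e, (X : Polynomial (ZMod 2)) ^ i with hge
  have hga0 : ga ≠ 0 := by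
    intro h
    have heval : ga.eval 0 = 1 := by
      rw [hga]
      rw [Polynomial.eval_finset_sum]
      rw [Finset.sum_eq_single_of_mem 0 (Finset.mem_range.2 ha)]
      · simp
      · intro i _ hi
        simp [zero_pow hi]
    rw [h] at heval
    simp at heval
  have hdu : ¬ IsUnit (EuclideanDomain.gcd ga ge) := by
    rw [EuclideanDomain.gcd_isUnit_iff]; exact hcop
  have hdne : EuclideanDomain.gcd ga ge ≠ 0 := by
    intro h
    exact hga0 (EuclideanDomain.gcd_eq_zero_iff.1 h).1
  obtain ⟨π, hπirr, hπdvd⟩ := WfDvdMonoid.exists_irreducible_factor hdu hdne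
  have hπa : π ∣ ga := hπdvd.trans (EuclideanDomain.gcd_dvd_left _ _)
  have hπe : π ∣ ge := hπdvd.trans (EuclideanDomain.gcd_dvd_right _ _)
  -- pass to the algebraic closure
  set K := AlgebraicClosure (ZMod 2)
  haveI : CharP K 2 := charP_of_injective_algebraMap (algebraMap (ZMod 2) K).injective 2
  have hdeg : (π.map (algebraMap (ZMod 2) K)).degree ≠ 0 := by
    rw [Polynomial.degree_map]
    intro h
    exact hπirr.not_isUnit (Polynomial.isUnit_iff_degree_eq_zero.2 h)
  obtain ⟨r, hr⟩ := IsAlgClosed.exists_root _ hdeg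
  have hπr : (Polynomial.aeval r) π = 0 := by
    rw [Polynomial.aeval_def, ← Polynomial.eval_map]
    exact hr
  have haev : ∀ p : Polynomial (ZMod 2), π ∣ p → (Polynomial.aeval r) p = 0 := by
    intro p hp
    obtain ⟨c, rfl⟩ := hp
    rw [map_mul, hπr, zero_mul]
  have hsuma : ∑ i ∈ Finset.range a, r ^ i = 0 := by
    have := haev ga hπa
    rw [hga] at this
    simpa using this
  have hsume : ∑ i ∈ Finset.range e, r ^ i = 0 := by
    have := haev ge hπe
    rw [hge] at this
    simpa using this
  have hra : r ^ a = 1 := by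
    have := geom_sum_mul r a
    rw [hsuma, zero_mul] at this
    exact (sub_eq_zero.1 this.symm)
  have hre : r ^ e = 1 := by
    have := geom_sum_mul r e
    rw [hsume, zero_mul] at this
    exact (sub_eq_zero.1 this.symm)
  have hord : orderOf r ∣ Nat.gcd e a :=
    Nat.dvd_gcd (orderOf_dvd_of_pow_eq_one hre) (orderOf_dvd_of_pow_eq_one hra)
  rw [hea, Nat.dvd_one] at hord
  have hr1 : r = 1 := orderOf_eq_one_iff.1 hord
  subst hr1
  have hA : ((a : K)) = 0 := by simpa using hsuma
  have hB : ((e : K)) = 0 := by simpa using hsume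
  have h2a : 2 ∣ a := (CharP.cast_eq_zero_iff K 2 a).1 hA
  have h2e : 2 ∣ e := (CharP.cast_eq_zero_iff K 2 e).1 hB
  have : (2 : ℕ) ∣ 1 := hea ▸ Nat.dvd_gcd h2e h2a
  norm_num at this

end Geom

section Frob

variable (E : Type*) [CommRing E] [CharP E 2] [Algebra (ZMod 2) E]

/-- The Frobenius `x ↦ x²` as a `ZMod 2`-linear endomorphism. -/
noncomputable def frE : Module.End (ZMod 2) E where
  toFun x := x ^ 2
  map_add' x y := CharTwo.add_sq x y
  map_smul' c x := by
    obtain hc | hc : c = 0 ∨ c = 1 := by revert c; decide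
    · subst hc; simp
    · subst hc; simp

variable {E}

@[simp] lemma frE_apply (x : E) : frE E x = x ^ 2 := rfl

lemma frE_pow_apply (k : ℕ) (z : E) : ((frE E) ^ k) z = z ^ 2 ^ k := by
  induction k generalizing z with
  | zero => simp
  | succ n ih =>
    rw [pow_succ, Module.End.mul_apply, frE_apply, ih, ← pow_mul, ← pow_succ']

lemma aeval_frE_sumX {ι : Type*} (s : Finset ι) (n : ι → ℕ) (z : E) :
    (Polynomial.aeval (frE E) (∑ i ∈ s, (X : Polynomial (ZMod 2)) ^ n i)) z
      = ∑ i ∈ s, z ^ 2 ^ n i := by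
  rw [map_sum, LinearMap.sum_apply]
  exact Finset.sum_congr rfl fun i _ => by
    rw [map_pow, Polynomial.aeval_X, frE_pow_apply]

lemma aux_aeval_sq (m : ℕ) (z : E) :
    (Polynomial.aeval (frE E) ((∑ i ∈ Finset.range m, (X : Polynomial (ZMod 2)) ^ i) ^ 2)) z
      = auxT m z := by
  have hsq : (∑ i ∈ Finset.range m, (X : Polynomial (ZMod 2)) ^ i) ^ 2
      = ∑ i ∈ Finset.range m, (X : Polynomial (ZMod 2)) ^ (2 * i) := by
    rw [sum_pow_char 2]
    exact Finset.sum_congr rfl fun i _ => by rw [← pow_mul, Nat.mul_comm]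
  rw [hsq, aeval_frE_sumX]
  unfold auxT
  exact Finset.sum_congr rfl fun i _ => by rw [two_pow_two_mul]

lemma aux_aeval_u0 (a b : ℕ) (z : E) :
    (Polynomial.aeval (frE E)
      ((∑ i ∈ Finset.range a, (X : Polynomial (ZMod 2)) ^ i) ^ 2 + X
        + X * (∑ i ∈ Finset.range b, (X : Polynomial (ZMod 2)) ^ i) ^ 2)) z
      = auxT a z + z ^ 2 + (auxT b z) ^ 2 := by
  rw [map_add, map_add, map_mul, LinearMap.add_apply, LinearMap.add_apply,
    Module.End.mul_apply, Polynomial.aeval_X, aux_aeval_sq, aux_aeval_sq, frE_apply, frE_apply]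

lemma aux_bezout {p q : Polynomial (ZMod 2)} (h : IsCoprime p q) (z : E)
    (hp : (Polynomial.aeval (frE E) p) z = 0) (hq : (Polynomial.aeval (frE E) q) z = 0) :
    z = 0 := by
  obtain ⟨c, d, hcd⟩ := h
  have h1 := congrArg (fun r => (Polynomial.aeval (frE E) r) z) hcd
  simp only [map_add, map_mul, LinearMap.add_apply, Module.End.mul_apply, hp, hq,
    map_zero, map_one, Module.End.one_apply, add_zero, zero_add] at h1
  exact h1.symm

end Frob

/-- Generalization of Proposition 3.5: for `q = 4`, `f = S_a + X²S_e² + S_b²S_e²` is a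
permutation polynomial of `F_{4^e}` provided `2 ∣ (a+b)`, `gcd(e, a) = 1`, and
`gcd((X^{2a}+1+X^{2b+1}+X³)/(X+1)², (X^e+1)/(X+1)) = 1`. -/
theorem stmt18 (e a b : ℕ) (he : 0 < e) (ha : 0 < a) (hb : 0 < b)
    (E : Type*) [Field E] [Fintype E] (hE : Fintype.card E = 4 ^ e)
    (S : ℕ → Polynomial E) (hS : ∀ d, S d = ∑ i ∈ Finset.range d, X ^ 4 ^ i)
    (f : Polynomial E) (hf : f = S a + X ^ 2 * S e ^ 2 + S b ^ 2 * S e ^ 2)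
    (hab : 2 ∣ a + b) (hea : Nat.gcd e a = 1)
    (u v : Polynomial E)
    (hu : (X + 1) ^ 2 * u = X ^ (2 * a) + 1 + X ^ (2 * b + 1) + X ^ 3)
    (hv : (X + 1) * v = X ^ e + 1)
    (huv : IsCoprime u v) :
    Function.Bijective fun x : E => f.eval x := by
  classical
  -- characteristic 2
  obtain ⟨p, hp⟩ := CharP.exists E
  haveI := hp
  obtain ⟨n, hpp, hcard⟩ := FiniteField.card E p
  have hp2 : p = 2 := by
    have h1 : p ∣ 2 := by
      refine hpp.dvd_of_dvd_pow (n := 2 * e) ?_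
      have hd : p ∣ p ^ (n : ℕ) := dvd_pow_self p n.pos.ne'
      rw [← hcard] at hd
      rw [hE, show (4 : ℕ) ^ e = 2 ^ (2 * e) from (two_pow_two_mul e).symm] at hd
      exact hd
    exact (Nat.prime_dvd_prime_iff_eq hpp Nat.prime_two).mp h1
  subst hp2
  haveI : CharP E 2 := hp
  letI : Algebra (ZMod 2) E := ZMod.algebra E 2
  have h2E : (2 : E) = 0 := by
    have := CharP.cast_eq_zero E 2
    exact_mod_cast this
  -- evaluation formulas
  have hSeval : ∀ d (x : E), (S d).eval x = auxT d x := by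
    intro d x
    rw [hS]
    simp [auxT, Polynomial.eval_finset_sum]
  have hfeval : ∀ x : E,
      f.eval x = auxT a x + x ^ 2 * (auxT e x) ^ 2 + (auxT b x) ^ 2 * (auxT e x) ^ 2 := by
    intro x
    rw [hf]
    simp [hSeval]
  have hx4 : ∀ x : E, x ^ 4 ^ e = x := fun x => by
    rw [← hE]; exact FiniteField.pow_card x
  have ht4 : ∀ x : E, (auxT e x) ^ 4 = auxT e x := fun x => auxT_frob e x (hx4 x)
  -- composition of sums
  have hcomp : ∀ d (x : E), auxT e (auxT d x) = (d : E) * auxT e x := by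
    intro d x
    have h0 : auxT e (auxT d x) = ∑ i ∈ Finset.range d, (auxT e x) ^ 4 ^ i := by
      rw [show auxT d x = ∑ i ∈ Finset.range d, x ^ 4 ^ i from rfl, auxT_sum]
      exact Finset.sum_congr rfl fun i _ => auxT_pow4 e i x
    rw [h0, show (∑ i ∈ Finset.range d, (auxT e x) ^ 4 ^ i) = auxT d (auxT e x) from rfl,
      auxT_fixed d (ht4 x)]
  -- parity facts
  have hcast01 : ∀ m : ℕ, ((m : E)) ^ 2 = (m : E) := by
    intro m
    rcases Nat.even_or_odd m with hm | hm
    · obtain ⟨k, hk⟩ := hm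
      subst hk
      have : ((k : E) + (k : E)) = 0 := CharTwo.add_self_eq_zero _
      push_cast
      rw [this]
      ring
    · obtain ⟨k, hk⟩ := hm
      subst hk
      push_cast
      rw [h2E]
      ring
  have habE : (a : E) + (b : E) = 0 := by
    have : (((a + b : ℕ)) : E) = 0 := (CharP.cast_eq_zero_iff E 2 _).mpr hab
    push_cast at this
    exact this
  -- trace preservation
  have htr : ∀ x : E, auxT e (f.eval x) = auxT e x := by
    intro x
    have hc2 : ((auxT e x) ^ 2) ^ 4 = (auxT e x) ^ 2 := by
      rw [← pow_mul, show 2 * 4 = 4 * 2 from rfl, pow_mul, ht4 x]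
    rw [hfeval x, auxT_add, auxT_add]
    rw [show x ^ 2 * (auxT e x) ^ 2 = (auxT e x) ^ 2 * x ^ 2 from mul_comm _ _,
      auxT_smul e (x ^ 2) hc2, auxT_sq,
      show (auxT b x) ^ 2 * (auxT e x) ^ 2 = (auxT e x) ^ 2 * (auxT b x) ^ 2 from mul_comm _ _,
      auxT_smul e ((auxT b x) ^ 2) hc2, auxT_sq, hcomp a x, hcomp b x]
    have hb2 := hcast01 b
    have ht := ht4 x
    set t := auxT e x
    linear_combination (1 + (b : E) ^ 2) * ht + t * hb2 + t * habE
  -- polynomials over ZMod 2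
  set ga : Polynomial (ZMod 2) := ∑ i ∈ Finset.range a, (X : Polynomial (ZMod 2)) ^ i with hga
  set gb : Polynomial (ZMod 2) := ∑ i ∈ Finset.range b, (X : Polynomial (ZMod 2)) ^ i with hgb
  set ge : Polynomial (ZMod 2) := ∑ i ∈ Finset.range e, (X : Polynomial (ZMod 2)) ^ i with hge
  set u0 : Polynomial (ZMod 2) := ga ^ 2 + X + X * gb ^ 2 with hu0
  have hgeoma : ga * (X + 1) = X ^ a + 1 := geom2 X a
  have hgeomb : gb * (X + 1) = X ^ b + 1 := geom2 X b
  have hgeome : ge * (X + 1) = X ^ e + 1 := geom2 X e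
  have h2R : (2 : Polynomial (ZMod 2)) = 0 := by
    have := CharP.cast_eq_zero (Polynomial (ZMod 2)) 2
    exact_mod_cast this
  -- the key polynomial identity
  have hC3 : ((X : Polynomial (ZMod 2)) + 1) ^ 2 * u0
      = X ^ (2 * a) + 1 + X ^ (2 * b + 1) + X ^ 3 := by
    have e1 : ((X : Polynomial (ZMod 2)) + 1) ^ 2 * ga ^ 2 = X ^ (2 * a) + 1 := by
      rw [← mul_pow, mul_comm ((X : Polynomial (ZMod 2)) + 1) ga, hgeoma, CharTwo.add_sq,
        one_pow, ← pow_mul, Nat.mul_comm a 2]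
    have e2 : ((X : Polynomial (ZMod 2)) + 1) ^ 2 * (X * gb ^ 2) = X ^ (2 * b + 1) + X := by
      have h : ((X : Polynomial (ZMod 2)) + 1) ^ 2 * (X * gb ^ 2)
          = X * (gb * (X + 1)) ^ 2 := by ring
      rw [h, hgeomb, CharTwo.add_sq, one_pow, ← pow_mul, Nat.mul_comm b 2, mul_add, mul_one,
        ← pow_succ']
    have e3 : ((X : Polynomial (ZMod 2)) + 1) ^ 2 * X = X ^ 3 + 2 * X ^ 2 + X := by ring
    calc ((X : Polynomial (ZMod 2)) + 1) ^ 2 * u0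
        = ((X : Polynomial (ZMod 2)) + 1) ^ 2 * ga ^ 2 + ((X : Polynomial (ZMod 2)) + 1) ^ 2 * X
          + ((X : Polynomial (ZMod 2)) + 1) ^ 2 * (X * gb ^ 2) := by rw [hu0]; ring
      _ = (X ^ (2 * a) + 1) + (X ^ 3 + 2 * X ^ 2 + X) + (X ^ (2 * b + 1) + X) := by
          rw [e1, e2, e3]
      _ = X ^ (2 * a) + 1 + X ^ (2 * b + 1) + X ^ 3 := by
          linear_combination (X ^ 2 + X : Polynomial (ZMod 2)) * h2R
  -- identify u and v as base changes
  set φ : ZMod 2 →+* E := algebraMap (ZMod 2) E with hφ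
  have hXne : ((X : Polynomial E) + 1) ≠ 0 := by
    have h := Polynomial.X_add_C_ne_zero (1 : E)
    rwa [Polynomial.C_1] at h
  have hu' : u = u0.map φ := by
    have h := congrArg (Polynomial.map φ) hC3
    simp only [Polynomial.map_mul, Polynomial.map_pow, Polynomial.map_add, Polynomial.map_one,
      Polynomial.map_X] at h
    have h2 : ((X : Polynomial E) + 1) ^ 2 * (u0.map φ)
        = X ^ (2 * a) + 1 + X ^ (2 * b + 1) + X ^ 3 := h
    exact mul_left_cancel₀ (pow_ne_zero 2 hXne) (hu.trans h2.symm)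
  have hv' : v = ge.map φ := by
    have h := congrArg (Polynomial.map φ) hgeome
    simp only [Polynomial.map_mul, Polynomial.map_pow, Polynomial.map_add, Polynomial.map_one,
      Polynomial.map_X] at h
    have h2 : ((X : Polynomial E) + 1) * (ge.map φ) = X ^ e + 1 := by
      rw [mul_comm]; exact h
    exact mul_left_cancel₀ hXne (hv.trans h2.symm)
  -- coprimality over ZMod 2
  have hcop0 : IsCoprime u0 ge := by
    rw [← Polynomial.isCoprime_map φ]
    rw [← hu', ← hv']
    exact huv
  have hcopU : IsCoprime u0 (ge ^ 2) := hcop0.pow_right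
  have hcopA : IsCoprime (ga ^ 2) (ge ^ 2) :=
    (aux_coprime_geom a e ha hea).pow
  -- injectivity
  have hinj : Function.Injective fun x : E => f.eval x := by
    intro x y hxy
    simp only at hxy
    have htxy : auxT e x = auxT e y := by
      rw [← htr x, ← htr y, hxy]
    set t := auxT e x with htdef
    set z := x + y with hz
    have hTz : auxT e z = 0 := by
      rw [hz, auxT_add, ← htxy, ← htdef, CharTwo.add_self_eq_zero]
    have hE1 : auxT a z + t ^ 2 * (z ^ 2 + (auxT b z) ^ 2) = 0 := by
      have h0 : f.eval x + f.eval y = 0 := by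
        rw [hxy]; exact CharTwo.add_self_eq_zero _
      rw [hfeval, hfeval] at h0
      rw [← htxy, ← htdef] at h0
      rw [hz, auxT_add, auxT_add, CharTwo.add_sq, CharTwo.add_sq]
      linear_combination h0
    have hz0 : z = 0 := by
      by_cases ht0 : t = 0
      · -- case t = 0
        rw [ht0] at hE1
        simp only [ne_eq, OfNat.ofNat_ne_zero, not_false_eq_true, zero_pow, zero_mul,
          add_zero] at hE1
        refine aux_bezout hcopA z ?_ ?_
        · rw [aux_aeval_sq]; exact hE1
        · rw [aux_aeval_sq]; exact hTz
      · -- case t ≠ 0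
        have hc2 : (t ^ 2) ^ 4 = t ^ 2 := by
          rw [← pow_mul, show 2 * 4 = 4 * 2 from rfl, pow_mul, htdef, ht4 x]
        have hw0 : t ^ 2 * z = 0 := by
          refine aux_bezout hcopU (t ^ 2 * z) ?_ ?_
          · rw [hu0, aux_aeval_u0]
            rw [auxT_smul a z hc2, auxT_smul b z hc2, mul_pow]
            linear_combination t ^ 2 * hE1
          · rw [aux_aeval_sq, auxT_smul e z hc2, hTz, mul_zero]
        rcases mul_eq_zero.mp hw0 with h | h
        · exact absurd (by simpa using h) ht0
        · exact h
    have : x + y = 0 := by rw [← hz]; exact hz0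
    linear_combination this - y * h2E
  exact Finite.injective_iff_bijective.mp hinj
end

section
/- Let q = 4 and f = S_a + S_b + S_e + X²S_e² + S_bS_e³ ∈ F_{q^e}[X], where a, b, e are positive integers. If 2 | (a+e), gcd(e, a−b) = 1, and gcd( (X^{2a}+X³+X+1)/(X+1)², (X^e+1)/(X+1) ) = 1 in F_4[X], then f is a permutation polynomial of F_{4^e}. -/
open Polynomial Finset

section Helpers

variable {F : Type*} [Field F]

/-- Evaluation of a polynomial as a 2-linearized operator: `X^n` acts as `z ↦ z^(2^n)`. -/
noncomputable def lphi (p : Polynomial F) (z : F) : F := p.sum fun n c => c * z ^ 2 ^ n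

lemma lphi_add (p q : Polynomial F) (z : F) : lphi (p + q) z = lphi p z + lphi q z :=
  Polynomial.sum_add_index p q _ (fun _ => zero_mul _) (fun _ _ _ => add_mul _ _ _)

lemma lphi_monomial (n : ℕ) (a : F) (z : F) : lphi (monomial n a) z = a * z ^ 2 ^ n :=
  Polynomial.sum_monomial_index a _ (zero_mul _)

lemma lphi_zero (z : F) : lphi (0 : Polynomial F) z = 0 := Polynomial.sum_zero_index _

lemma lphi_one (z : F) : lphi (1 : Polynomial F) z = z := by
  have h : (1 : Polynomial F) = monomial 0 1 := by simp
  rw [h, lphi_monomial]; simp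

lemma lphi_at_zero (p : Polynomial F) : lphi p 0 = 0 := by
  unfold lphi
  rw [Polynomial.sum_def]
  apply Finset.sum_eq_zero
  intro i _
  rw [zero_pow (by positivity), mul_zero]

lemma lphi_finsetsum {ι : Type*} (s : Finset ι) (p : ι → Polynomial F) (z : F) :
    lphi (∑ i ∈ s, p i) z = ∑ i ∈ s, lphi (p i) z := by
  induction s using Finset.cons_induction with
  | empty => simp [lphi_zero]
  | cons a s ha ih => rw [Finset.sum_cons, Finset.sum_cons, lphi_add, ih]

lemma lphi_C_mul (a : F) (p : Polynomial F) (z : F) : lphi (C a * p) z = a * lphi p z := by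
  induction p using Polynomial.induction_on' with
  | add p q hp hq => rw [mul_add, lphi_add, lphi_add, hp, hq, mul_add]
  | monomial n b => rw [C_mul_monomial, lphi_monomial, lphi_monomial, mul_assoc]

lemma lphi_X_pow_mul (n : ℕ) (p : Polynomial F) (z : F) :
    lphi (X ^ n * p) z = lphi p (z ^ 2 ^ n) := by
  induction p using Polynomial.induction_on' with
  | add p q hp hq => rw [mul_add, lphi_add, hp, hq, lphi_add]
  | monomial m a =>
      rw [X_pow_eq_monomial, monomial_mul_monomial, one_mul, lphi_monomial, lphi_monomial,
        ← pow_mul, ← pow_add]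

lemma lphi_X_pow (n : ℕ) (z : F) : lphi (X ^ n : Polynomial F) z = z ^ 2 ^ n := by
  have h := lphi_X_pow_mul n (1 : Polynomial F) z
  rwa [mul_one, lphi_one] at h

/-- polynomials all of whose coefficients are `0` or `1` -/
def Sq01 (p : Polynomial F) : Prop := ∀ j, p.coeff j = 0 ∨ p.coeff j = 1

omit [Field F] in
lemma Sq01.Xpow {F : Type*} [Field F] (n : ℕ) : Sq01 (X ^ n : Polynomial F) := by
  intro j
  rw [coeff_X_pow]
  split <;> simp

section Char2

variable [CharP F 2]

lemma lphi_sq (p : Polynomial F) (hp : Sq01 p) (z : F) : (lphi p z) ^ 2 = lphi p (z ^ 2) := by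
  unfold lphi
  rw [Polynomial.sum_def, Polynomial.sum_def, sum_pow_char]
  apply Finset.sum_congr rfl
  intro n _
  rw [mul_pow, ← pow_mul, ← pow_mul]
  have hc : p.coeff n ^ 2 = p.coeff n := by rcases hp n with h | h <;> rw [h] <;> ring
  rw [hc, Nat.mul_comm]

lemma lphi_pow_pow (p : Polynomial F) (hp : Sq01 p) (z : F) (n : ℕ) :
    (lphi p z) ^ 2 ^ n = lphi p (z ^ 2 ^ n) := by
  induction n generalizing z with
  | zero => simp
  | succ n ih => rw [pow_succ, pow_mul, pow_mul, ih, lphi_sq p hp]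

lemma lphi_mul (p q : Polynomial F) (hq : Sq01 q) (z : F) :
    lphi (p * q) z = lphi p (lphi q z) := by
  induction p using Polynomial.induction_on' with
  | add p r hp hr => rw [add_mul, lphi_add, hp, hr, lphi_add]
  | monomial n a =>
      rw [← C_mul_X_pow_eq_monomial, mul_assoc, lphi_C_mul, lphi_X_pow_mul,
        lphi_C_mul, lphi_X_pow, ← lphi_pow_pow q hq]

lemma Sq01.add {p q : Polynomial F} (hp : Sq01 p) (hq : Sq01 q) : Sq01 (p + q) := by
  intro j
  rw [coeff_add]
  have h2 : (1 : F) + 1 = 0 := by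
    have h := CharP.cast_eq_zero F 2
    rw [one_add_one_eq_two]
    exact_mod_cast h
  rcases hp j with h | h <;> rcases hq j with h' | h' <;> rw [h, h'] <;> simp [h2]

lemma Sq01.sq {p : Polynomial F} (hp : Sq01 p) : Sq01 (p ^ 2) := by
  intro j
  rw [← Polynomial.map_frobenius_expand, coeff_map, Polynomial.coeff_expand (by norm_num : 0 < 2)]
  split
  · rcases hp (j / 2) with h | h <;> simp [h, frobenius]
  · simp

lemma Sq01.sumXpow {ι : Type*} (s : Finset ι) (k : ι → ℕ) :
    Sq01 (∑ i ∈ s, (X : Polynomial F) ^ k i) := by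
  induction s using Finset.cons_induction with
  | empty => intro j; simp
  | cons a s ha ih =>
      rw [Finset.sum_cons]
      exact (Sq01.Xpow (k a)).add ih

end Char2

/-- 4-linearized partial trace sums -/
noncomputable def sig (d : ℕ) (x : F) : F := ∑ i ∈ range d, x ^ 4 ^ i

lemma sig_apply (d : ℕ) (x : F) : sig d x = ∑ i ∈ range d, x ^ 4 ^ i := rfl

omit [Field F] in
lemma pow4 (i : ℕ) : (4 : ℕ) ^ i = 2 ^ (2 * i) := by
  rw [pow_mul]; norm_num

section Char2'
variable [CharP F 2]

lemma sig_add (d : ℕ) (x y : F) : sig d (x + y) = sig d x + sig d y := by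
  unfold sig
  rw [← Finset.sum_add_distrib]
  apply Finset.sum_congr rfl
  intro i _
  rw [pow4 i]
  have h := map_add (iterateFrobenius F 2 (2*i)) x y
  simpa [iterateFrobenius_def] using h

lemma sig_zero (d : ℕ) : sig d (0 : F) = 0 := by
  unfold sig
  apply Finset.sum_eq_zero
  intro i _
  exact zero_pow (by positivity)

lemma sig_pow (d k : ℕ) (x : F) : sig d (x ^ 4 ^ k) = (sig d x) ^ 4 ^ k := by
  unfold sig
  rw [pow4 k, sum_pow_char_pow]
  apply Finset.sum_congr rfl
  intro i _
  rw [← pow_mul, ← pow_mul, Nat.mul_comm]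

lemma sig_sq (d : ℕ) (x : F) : sig d (x ^ 2) = (sig d x) ^ 2 := by
  unfold sig
  rw [sum_pow_char]
  apply Finset.sum_congr rfl
  intro i _
  rw [← pow_mul, ← pow_mul, Nat.mul_comm]

lemma fix_pow {c : F} (hc : c ^ 4 = c) (i : ℕ) : c ^ 4 ^ i = c := by
  induction i with
  | zero => rw [pow_zero, pow_one]
  | succ i ih => rw [pow_succ, pow_mul, ih, hc]

lemma sig_fix_mul (d : ℕ) (c x : F) (hc : c ^ 4 = c) : sig d (c * x) = c * sig d x := by
  unfold sig
  rw [Finset.mul_sum]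
  apply Finset.sum_congr rfl
  intro i _
  rw [mul_pow, fix_pow hc]

lemma sig_const (d : ℕ) (c : F) (hc : c ^ 4 = c) : sig d c = (d : F) * c := by
  unfold sig
  calc ∑ i ∈ range d, c ^ 4 ^ i = ∑ _i ∈ range d, c := by
        apply Finset.sum_congr rfl
        intro i _
        exact fix_pow hc i
    _ = (d : F) * c := by rw [Finset.sum_const, card_range, nsmul_eq_mul]

end Char2'

end Helpers

lemma period_gcd {M : Type*} (s : ℕ → M) : ∀ m n : ℕ, (∀ i, s (i + m) = s i) →
    (∀ i, s (i + n) = s i) → ∀ i, s (i + Nat.gcd m n) = s i := by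
  intro m
  induction m using Nat.strong_induction_on with
  | _ m ih =>
    intro n hm hn i
    rcases Nat.eq_zero_or_pos m with hm0 | hm0
    · subst hm0; rw [Nat.gcd_zero_left]; exact hn i
    · have hmul : ∀ k i, s (i + m * k) = s i := by
        intro k
        induction k with
        | zero => simp
        | succ k ihk =>
            intro j
            have hj : j + m * (k + 1) = (j + m * k) + m := by ring
            rw [hj, hm, ihk]
      have hmod : ∀ j, s (j + n % m) = s j := by
        intro j
        have h1 : s (j + n % m + m * (n / m)) = s (j + n % m) := hmul (n / m) _
        have h2 : j + n % m + m * (n / m) = j + n := by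
          rw [add_assoc, Nat.mod_add_div]
        rw [h2] at h1
        rw [← h1, hn]
      rw [Nat.gcd_rec]
      exact ih (n % m) (Nat.mod_lt _ hm0) m hmod hm i

/-- Generalization of Proposition 3.6: for `q = 4`, `f = S_a + S_b + S_e + X²S_e² + S_bS_e³`
is a permutation polynomial of `F_{4^e}` provided `2 ∣ (a+e)`, `gcd(e, a−b) = 1`, and
`gcd((X^{2a}+X³+X+1)/(X+1)², (X^e+1)/(X+1)) = 1`. -/
theorem stmt19 (e a b : ℕ) (he : 0 < e) (ha : 0 < a) (hb : 0 < b)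
    (E : Type*) [Field E] [Fintype E] (hE : Fintype.card E = 4 ^ e)
    (S : ℕ → Polynomial E) (hS : ∀ d, S d = ∑ i ∈ Finset.range d, X ^ 4 ^ i)
    (f : Polynomial E) (hf : f = S a + S b + S e + X ^ 2 * S e ^ 2 + S b * S e ^ 3)
    (hae : 2 ∣ a + e) (hgcd : Int.gcd (e : ℤ) ((a : ℤ) - (b : ℤ)) = 1)
    (u v : Polynomial E)
    (hu : (X + 1) ^ 2 * u = X ^ (2 * a) + X ^ 3 + X + 1)
    (hv : (X + 1) * v = X ^ e + 1)
    (huv : IsCoprime u v) :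
    Function.Bijective fun x : E => f.eval x := by
  classical
  -- characteristic 2
  haveI hring : CharP E (ringChar E) := ringChar.charP E
  obtain ⟨n, hprime, hcard⟩ := FiniteField.card E (ringChar E)
  have hchar2 : ringChar E = 2 := by
    have hdvd : ringChar E ∣ 2 ^ (2 * e) := by
      rw [hE] at hcard
      have : ringChar E ∣ 4 ^ e := hcard ▸ dvd_pow_self (ringChar E) (by positivity)
      rw [show (4 : ℕ) ^ e = 2 ^ (2 * e) from pow4 e] at this
      exact this
    have := hprime.dvd_of_dvd_pow hdvd
    exact (Nat.prime_dvd_prime_iff_eq hprime Nat.prime_two).mp this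
  haveI hE2 : CharP E 2 := by rw [← hchar2]; exact hring
  haveI : Fact (Nat.Prime 2) := ⟨Nat.prime_two⟩
  have h20 : (2 : E) = 0 := by exact_mod_cast CharP.cast_eq_zero E 2
  have hadd2 : ∀ x : E, x + x = 0 := fun x => by linear_combination x * h20
  have haddeq : ∀ x y : E, x + y = 0 → x = y := fun x y h => by linear_combination h - y * h20
  have h4e : ∀ x : E, x ^ 4 ^ e = x := by
    intro x
    have := FiniteField.pow_card x
    rwa [hE] at this
  -- trace facts
  have htr4 : ∀ x : E, (sig e x) ^ 4 = sig e x := by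
    intro x
    have hfr : (sig e x) ^ 4 = ∑ i ∈ range e, x ^ 4 ^ (i + 1) := by
      rw [sig_apply]
      have hmap := map_sum (iterateFrobenius E 2 2) (fun i => x ^ (4:ℕ) ^ i) (range e)
      simp only [iterateFrobenius_def] at hmap
      norm_num at hmap
      rw [hmap]
      apply Finset.sum_congr rfl
      intro i _
      rw [← pow_mul, ← pow_succ]
    have hA1 : ∑ i ∈ range (e + 1), x ^ 4 ^ i = sig e x + x := by
      rw [Finset.sum_range_succ, h4e]; rfl
    have hA2 : ∑ i ∈ range (e + 1), x ^ 4 ^ i = (sig e x) ^ 4 + x := by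
      rw [Finset.sum_range_succ', ← hfr, pow_zero, pow_one]
    rw [hA1] at hA2
    exact (add_right_cancel hA2.symm)
  have hsig_e_sig : ∀ (d : ℕ) (x : E), sig e (sig d x) = (d : E) * sig e x := by
    intro d x
    have hsum : sig e (sig d x) = ∑ i ∈ range d, sig e (x ^ 4 ^ i) := by
      rw [sig_apply d x]
      induction (range d) using Finset.cons_induction with
      | empty => simpa using sig_zero e
      | cons j s hj ih => rw [Finset.sum_cons, Finset.sum_cons, sig_add, ih]
    rw [hsum]
    calc ∑ i ∈ range d, sig e (x ^ 4 ^ i) = ∑ _i ∈ range d, sig e x := by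
          apply Finset.sum_congr rfl
          intro i _
          rw [sig_pow, fix_pow (htr4 x)]
      _ = (d : E) * sig e x := by rw [Finset.sum_const, card_range, nsmul_eq_mul]
  -- evaluation of f
  have hfx : ∀ x : E, f.eval x =
      sig a x + sig b x + sig e x + x ^ 2 * (sig e x) ^ 2 + sig b x * (sig e x) ^ 3 := by
    intro x
    have hSe : ∀ d, (S d).eval x = sig d x := by
      intro d
      rw [hS, Polynomial.eval_finset_sum, sig_apply]
      apply Finset.sum_congr rfl
      intro i _
      rw [eval_pow, eval_X]
    rw [hf]
    simp only [eval_add, eval_mul, eval_pow, eval_X, hSe]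
  -- f preserves the trace
  have htrf : ∀ x : E, sig e (f.eval x) = sig e x := by
    intro x
    rw [hfx]
    have ht4 : (sig e x) ^ 4 = sig e x := htr4 x
    have ht24 : ((sig e x) ^ 2) ^ 4 = (sig e x) ^ 2 := by
      calc ((sig e x) ^ 2) ^ 4 = ((sig e x) ^ 4) ^ 2 := by ring
        _ = (sig e x) ^ 2 := by rw [ht4]
    have ht34 : ((sig e x) ^ 3) ^ 4 = (sig e x) ^ 3 := by
      calc ((sig e x) ^ 3) ^ 4 = ((sig e x) ^ 4) ^ 3 := by ring
        _ = (sig e x) ^ 3 := by rw [ht4]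
    rw [sig_add, sig_add, sig_add, sig_add, hsig_e_sig a x, hsig_e_sig b x, sig_const e _ ht4,
      show x ^ 2 * (sig e x) ^ 2 = (sig e x) ^ 2 * x ^ 2 from mul_comm _ _,
      sig_fix_mul e _ _ ht24, sig_sq,
      show sig b x * (sig e x) ^ 3 = (sig e x) ^ 3 * sig b x from mul_comm _ _,
      sig_fix_mul e _ _ ht34, hsig_e_sig b x]
    have hae0 : ((a : E) + (e : E)) = 0 := by
      have h1 : ((a + e : ℕ) : E) = 0 := (CharP.cast_eq_zero_iff E 2 _).mpr hae
      push_cast at h1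
      exact h1
    linear_combination (sig e x) * hae0 + (1 + (b : E)) * ht4 + (b : E) * (sig e x) * h20
  -- explicit forms of u and v
  have hX1ne : ((X : Polynomial E) + 1) ≠ 0 := by
    intro h
    have := congrArg (eval 0) h
    simp at this
  haveI : CharP (Polynomial E) 2 := Polynomial.instCharP 2
  have h20X : (2 : Polynomial E) = 0 := by exact_mod_cast CharP.cast_eq_zero (Polynomial E) 2
  have hgeom : ∀ d : ℕ, (∑ i ∈ range d, (X : Polynomial E) ^ i) * (X + 1) = X ^ d + 1 := by
    intro d
    have hg := geom_sum_mul (X : Polynomial E) d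
    linear_combination hg + ((∑ i ∈ range d, (X : Polynomial E) ^ i) - 1) * h20X
  have hv' : v = ∑ i ∈ range e, (X : Polynomial E) ^ i := by
    apply mul_left_cancel₀ hX1ne
    rw [hv]
    linear_combination - (hgeom e)
  have hu' : u = X + (∑ i ∈ range a, (X : Polynomial E) ^ i) ^ 2 := by
    apply mul_left_cancel₀ (pow_ne_zero 2 hX1ne)
    rw [hu]
    have hga := hgeom a
    linear_combination (-(((∑ i ∈ range a, (X : Polynomial E) ^ i) * (X + 1)) + (X ^ a + 1))) * hga
      + (-(X ^ 2 + X ^ a)) * h20X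
  -- Sq01 facts
  have hSqg : Sq01 (∑ i ∈ range a, (X : Polynomial E) ^ i) := Sq01.sumXpow (range a) id
  have hSqu : Sq01 u := by
    rw [hu']
    have h1 : Sq01 ((X : Polynomial E)) := by
      have := Sq01.Xpow (F := E) 1
      rwa [pow_one] at this
    exact h1.add hSqg.sq
  have hSqv : Sq01 v := by rw [hv']; exact Sq01.sumXpow (range e) id
  have hSqu2 : Sq01 (u ^ 2) := hSqu.sq
  have hSqv2 : Sq01 (v ^ 2) := hSqv.sq
  -- lphi computations
  have hsumsq : ∀ d : ℕ, (∑ i ∈ range d, (X : Polynomial E) ^ i) ^ 2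
      = ∑ i ∈ range d, (X : Polynomial E) ^ (2 * i) := by
    intro d
    rw [sum_pow_char]
    apply Finset.sum_congr rfl
    intro i _
    rw [← pow_mul, Nat.mul_comm]
  have hphisum : ∀ (d : ℕ) (z : E), lphi ((∑ i ∈ range d, (X : Polynomial E) ^ i) ^ 2) z
      = sig d z := by
    intro d z
    rw [hsumsq, lphi_finsetsum, sig_apply]
    apply Finset.sum_congr rfl
    intro i _
    rw [lphi_X_pow, ← pow4]
  have hphiu : ∀ z : E, lphi u z = z ^ 2 + sig a z := by
    intro z
    rw [hu', lphi_add, hphisum]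
    congr 1
    have := lphi_X_pow (F := E) 1 z
    rwa [pow_one] at this
  have hphiv2 : ∀ z : E, lphi (v ^ 2) z = sig e z := by
    intro z
    rw [hv', hphisum]
  -- the coprimality kill
  have hkill : ∀ z : E, sig e z = 0 → z ^ 4 = sig a (sig a z) → z = 0 := by
    intro z h0 hz4
    have hU : lphi (u ^ 2) z = 0 := by
      rw [sq, lphi_mul u u hSqu, hphiu, hphiu, sig_add]
      have hsq : sig a (z ^ 2) = (sig a z) ^ 2 := sig_sq a z
      linear_combination (-1 : E) * hz4 + hsq
        + (z ^ 2 * z ^ 2 + z ^ 2 * sig a z + sig a z * sig a z) * h20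
    have hV : lphi (v ^ 2) z = 0 := by rw [hphiv2]; exact h0
    have hcop : IsCoprime (u ^ 2) (v ^ 2) := huv.pow
    obtain ⟨P, Q, hPQ⟩ := hcop
    calc z = lphi 1 z := (lphi_one z).symm
      _ = lphi (P * u ^ 2 + Q * v ^ 2) z := by rw [hPQ]
      _ = lphi P (lphi (u ^ 2) z) + lphi Q (lphi (v ^ 2) z) := by
          rw [lphi_add, lphi_mul P _ hSqu2, lphi_mul Q _ hSqv2]
      _ = 0 := by rw [hU, hV, lphi_at_zero, lphi_at_zero, add_zero]
  -- the window / period kill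
  have hwindow : ∀ (c : ℕ) (w : E), Nat.gcd e c = 1 → sig c w = 0 → sig e w = 0 → w = 0 := by
    intro c w hgcd1 hc0 he0
    rcases Nat.eq_zero_or_pos c with hc | hc
    · subst hc
      rw [Nat.gcd_zero_right] at hgcd1
      rw [hgcd1, sig_apply] at he0
      simpa using he0
    · set s : ℕ → E := fun m => w ^ 4 ^ m with hs
      have hper_e : ∀ i, s (i + e) = s i := by
        intro i
        show w ^ 4 ^ (i + e) = w ^ 4 ^ i
        rw [pow_add, Nat.mul_comm, pow_mul, h4e]
      have hwin : ∀ m, ∑ j ∈ range c, s (m + j) = 0 := by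
        intro m
        calc ∑ j ∈ range c, s (m + j) = ∑ j ∈ range c, (w ^ 4 ^ m) ^ 4 ^ j := by
              apply Finset.sum_congr rfl
              intro j _
              show w ^ 4 ^ (m + j) = _
              rw [pow_add, pow_mul]
          _ = sig c (w ^ 4 ^ m) := (sig_apply c _).symm
          _ = (sig c w) ^ 4 ^ m := sig_pow c m w
          _ = 0 := by rw [hc0]; exact zero_pow (by positivity)
      have hper_c : ∀ i, s (i + c) = s i := by
        intro i
        obtain ⟨c', rfl⟩ := Nat.exists_eq_succ_of_ne_zero hc.ne'
        have h1 := hwin i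
        have h2 := hwin (i + 1)
        rw [Finset.sum_range_succ'] at h1
        rw [Finset.sum_range_succ] at h2
        have h1' : (∑ j ∈ range c', s (i + 1 + j)) + s i = 0 := by
          rw [← h1]
          have hsum : (∑ j ∈ range c', s (i + 1 + j)) = ∑ j ∈ range c', s (i + (j + 1)) := by
            apply Finset.sum_congr rfl
            intro j _
            congr 1
            omega
          rw [hsum]
          rfl
        have h2' : (∑ j ∈ range c', s (i + 1 + j)) + s (i + c' + 1) = 0 := by
          rw [← h2]
          congr 2 <;> omega
        have e1 := haddeq _ _ h1'
        have e2 := haddeq _ _ h2'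
        show s (i + c' + 1) = s i
        rw [← e2, e1]
      have hper1 : ∀ i, s (i + 1) = s i := by
        have h := period_gcd s e c hper_e hper_c
        rwa [hgcd1] at h
      have hconst : ∀ i, s i = w := by
        intro i
        induction i with
        | zero => show w ^ 4 ^ 0 = w; rw [pow_zero, pow_one]
        | succ i ih => rw [← ih]; exact hper1 i
      by_contra hw0
      have hcast : ∀ d : ℕ, sig d w = (d : E) * w := by
        intro d
        rw [sig_apply]
        calc ∑ i ∈ range d, w ^ 4 ^ i = ∑ _i ∈ range d, w := by
              apply Finset.sum_congr rfl
              intro i _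
              exact hconst i
          _ = (d : E) * w := by rw [Finset.sum_const, card_range, nsmul_eq_mul]
      have hcE : (c : E) = 0 := by
        have := hc0
        rw [hcast] at this
        rcases mul_eq_zero.mp this with h | h
        · exact h
        · exact absurd h hw0
      have heE : (e : E) = 0 := by
        have := he0
        rw [hcast] at this
        rcases mul_eq_zero.mp this with h | h
        · exact h
        · exact absurd h hw0
      have hc2 : 2 ∣ c := (CharP.cast_eq_zero_iff E 2 c).mp hcE
      have he2 : 2 ∣ e := (CharP.cast_eq_zero_iff E 2 e).mp heE
      have : (2 : ℕ) ∣ 1 := hgcd1 ▸ Nat.dvd_gcd he2 hc2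
      norm_num at this
  -- main argument: injectivity
  have hinj : Function.Injective (fun x : E => f.eval x) := by
    intro x y hxy
    simp only at hxy
    have hty : sig e y = sig e x := by
      calc sig e y = sig e (f.eval y) := (htrf y).symm
        _ = sig e (f.eval x) := by rw [hxy]
        _ = sig e x := htrf x
    have hsez : sig e (x + y) = 0 := by
      rw [sig_add, hty]
      exact hadd2 _
    have hkey : sig a (x + y) + sig b (x + y) + (x + y) ^ 2 * (sig e x) ^ 2
        + sig b (x + y) * (sig e x) ^ 3 = 0 := by
      have h := hxy
      rw [hfx x, hfx y, hty] at h
      rw [sig_add, sig_add]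
      linear_combination h + (sig a y + sig b y + y * y * (sig e x) ^ 2
        + x * y * (sig e x) ^ 2 + sig b y * (sig e x) ^ 3) * h20
    -- reduce to (x+y) = 0
    suffices hz0 : x + y = 0 by exact haddeq x y hz0
    set z := x + y with hzdef
    set t := sig e x with htdef
    -- case split on the common trace t
    rcases eq_or_ne t 0 with ht0 | ht0
    · -- trace-zero case: use the gcd(e, a-b) = 1 window argument
      have hab : sig a z = sig b z := by
        apply haddeq
        rw [ht0] at hkey
        linear_combination hkey
      -- split according to which of a, b is larger
      rcases le_total b a with hba | hba
      · set c := a - b with hcdef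
        have hsplit : sig a z = sig b z + sig c (z ^ 4 ^ b) := by
          rw [sig_apply a z, show a = b + c by omega, Finset.sum_range_add]
          congr 1
          rw [sig_apply]
          apply Finset.sum_congr rfl
          intro i _
          rw [← pow_mul, ← pow_add]
        have hczero : sig c (z ^ 4 ^ b) = 0 := by linear_combination hab - hsplit
        have hezero : sig e (z ^ 4 ^ b) = 0 := by
          rw [sig_pow, hsez]
          exact zero_pow (by positivity)
        have hg1 : Nat.gcd e c = 1 := by
          have hceq : ((a : ℤ) - (b : ℤ)) = ((c : ℕ) : ℤ) := by omega
          rw [hceq, Int.gcd_natCast_natCast] at hgcd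
          exact hgcd
        have hw := hwindow c (z ^ 4 ^ b) hg1 hczero hezero
        exact pow_eq_zero_iff (by positivity) |>.mp hw
      · set c := b - a with hcdef
        have hsplit : sig b z = sig a z + sig c (z ^ 4 ^ a) := by
          rw [sig_apply b z, show b = a + c by omega, Finset.sum_range_add]
          congr 1
          rw [sig_apply]
          apply Finset.sum_congr rfl
          intro i _
          rw [← pow_mul, ← pow_add]
        have hczero : sig c (z ^ 4 ^ a) = 0 := by linear_combination (-1 : E) * hab - hsplit
        have hezero : sig e (z ^ 4 ^ a) = 0 := by
          rw [sig_pow, hsez]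
          exact zero_pow (by positivity)
        have hg1 : Nat.gcd e c = 1 := by
          have hceq : ((a : ℤ) - (b : ℤ)) = -((c : ℕ) : ℤ) := by omega
          rw [hceq] at hgcd
          simpa [Int.gcd, Int.natAbs_neg] using hgcd
        have hw := hwindow c (z ^ 4 ^ a) hg1 hczero hezero
        exact pow_eq_zero_iff (by positivity) |>.mp hw
    · -- trace-nonzero case: use the coprimality of u and v
      have ht4 : t ^ 4 = t := htr4 x
      have ht3 : t ^ 3 = 1 := by
        apply mul_right_cancel₀ ht0
        rw [one_mul, ← pow_succ]
        exact ht4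
      have hz2 : z ^ 2 = t * sig a z := by
        have h1 : sig a z + z ^ 2 * t ^ 2 = 0 := by
          rw [ht3, mul_one] at hkey
          linear_combination hkey - sig b z * h20
        have h2 : sig a z = z ^ 2 * t ^ 2 := haddeq _ _ h1
        rw [h2]
        linear_combination (-(z ^ 2)) * ht3
      have hz4 : z ^ 4 = sig a (sig a z) := by
        calc z ^ 4 = (z ^ 2) ^ 2 := by ring
          _ = (t * sig a z) ^ 2 := by rw [hz2]
          _ = t ^ 2 * (sig a z) ^ 2 := by ring
          _ = t ^ 2 * sig a (z ^ 2) := by rw [sig_sq]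
          _ = t ^ 2 * sig a (t * sig a z) := by rw [hz2]
          _ = t ^ 2 * (t * sig a (sig a z)) := by rw [sig_fix_mul a t _ ht4]
          _ = t ^ 3 * sig a (sig a z) := by ring
          _ = sig a (sig a z) := by rw [ht3, one_mul]
      exact hkill z hsez hz4
  exact Finite.injective_iff_bijective.mp hinj
end
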